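/- Let G be a finite group, m ≥ 1, and ρ_1, …, ρ_m irreducible representations of G on nonzero finite-dimensional complex vector spaces, with characters χ_1, …, χ_m. Let ψ_j : Z(G) → ℂ^× be the homomorphisms on the center Z(G) determined by ρ_j(z) = ψ_j(z)·id for z ∈ Z(G). Then the following are equivalent: (A) for all h, k ∈ G, if there exists λ ∈ ℂ with χ_j(γh) = λ·χ_j(γk) for every γ ∈ G and every j, then h = k; (B) both (i) for every h ≠ 1 in G there is j with ρ_j(h) ≠ id, and (ii) the characters ψ_j·ψ_1⁻¹ (j = 1, …, m) generate the full character group Hom(Z(G), ℂ^×). -/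

import Mathlib

open Polynomial

open Polynomial

lemma hasEigenvalue_of_isRoot_charpoly {W : Type*} [AddCommGroup W] [Module ℂ W]
    [FiniteDimensional ℂ W] (f : Module.End ℂ W) {μ : ℂ}
    (h : (LinearMap.charpoly f).IsRoot μ) : Module.End.HasEigenvalue f μ := by
  classical
  set b := Module.finBasis ℂ W with hb
  set M := LinearMap.toMatrix b b f with hM
  have hchar : M.charpoly = f.charpoly := LinearMap.charpoly_toMatrix f b
  have hmap : (Polynomial.evalRingHom μ).mapMatrix (Matrix.charmatrix M)
      = μ • (1 : Matrix (Fin (Module.finrank ℂ W)) (Fin (Module.finrank ℂ W)) ℂ) - M := by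
    ext i j
    by_cases hij : i = j
    · subst hij
      simp [Matrix.charmatrix_apply, Matrix.one_apply, Matrix.diagonal_apply]
    · simp [Matrix.charmatrix_apply, Matrix.one_apply, hij, Matrix.diagonal_apply]
  have hdet : (μ • (1 : Matrix (Fin (Module.finrank ℂ W)) (Fin (Module.finrank ℂ W)) ℂ) - M).det
      = 0 := by
    have h1 : (M.charpoly).eval μ = 0 := by
      rw [hchar]; exact h
    calc (μ • (1 : Matrix _ _ ℂ) - M).det
        = ((Polynomial.evalRingHom μ).mapMatrix (Matrix.charmatrix M)).det := by rw [hmap]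
      _ = (Polynomial.evalRingHom μ) (Matrix.charmatrix M).det := (RingHom.map_det _ _).symm
      _ = (M.charpoly).eval μ := rfl
      _ = 0 := h1
  obtain ⟨v, hv0, hv⟩ := Matrix.exists_mulVec_eq_zero_iff.mpr hdet
  set x := b.equivFun.symm v with hx
  have hrepr : ⇑(b.repr x) = v := by
    have : b.equivFun x = v := b.equivFun.apply_symm_apply v
    rw [← this]; rfl
  have hmat : LinearMap.toMatrix b b (μ • (1 : Module.End ℂ W) - f)
      = μ • (1 : Matrix _ _ ℂ) - M := by
    rw [map_sub, map_smul, hM]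
    congr 1
    rw [LinearMap.toMatrix_one]
  have hker : (μ • (1 : Module.End ℂ W) - f) x = 0 := by
    have h2 := LinearMap.toMatrix_mulVec_repr b b (μ • (1 : Module.End ℂ W) - f) x
    rw [hmat, hrepr, hv] at h2
    have h3 : b.repr ((μ • (1 : Module.End ℂ W) - f) x) = 0 := by
      ext i; exact (congrFun h2.symm i)
    simpa using congrArg b.repr.symm h3
  have hx0 : x ≠ 0 := by
    intro h0
    apply hv0
    rw [← hrepr, h0]
    simp
  refine Module.End.hasEigenvalue_of_hasEigenvector (x := x) ⟨?_, hx0⟩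
  rw [Module.End.mem_eigenspace_iff]
  have := sub_eq_zero.mp hker
  calc f x = (μ • (1 : Module.End ℂ W)) x := by rw [← this]
    _ = μ • x := by simp
open Polynomial

lemma eq_of_abs_one_re_one {z : ℂ} (habs : ‖z‖ = 1) (hre : z.re = 1) : z = 1 := by
  have hn : Complex.normSq z = 1 := by
    have := Complex.sq_norm z
    rw [habs] at this
    simpa using this.symm
  have him : z.im = 0 := by
    have : z.re * z.re + z.im * z.im = 1 := by rwa [Complex.normSq_apply] at hn
    nlinarith [sq_nonneg z.im]
  exact Complex.ext (by simp [hre]) (by simp [him])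

lemma multiset_all_eq_of_sum {s : Multiset ℂ} {l : ℂ}
    (hl : ‖l‖ = 1) (h1 : ∀ μ ∈ s, ‖μ‖ = 1)
    (hsum : s.sum = (Multiset.card s : ℂ) * l) : ∀ μ ∈ s, μ = l := by
  intro μ₀ hμ₀
  have hl0 : l ≠ 0 := by
    intro h; rw [h] at hl; simp at hl
  set g : ℂ →+ ℝ := Complex.reAddGroupHom.comp (AddMonoidHom.mulRight l⁻¹) with hg
  set t : Multiset ℝ := s.map g with ht
  have htsum : t.sum = (Multiset.card s : ℝ) := by
    rw [ht, ← AddMonoidHom.map_multiset_sum, hsum]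
    simp only [hg, AddMonoidHom.coe_comp, Function.comp_apply, AddMonoidHom.coe_mulRight,
      Complex.coe_reAddGroupHom]
    rw [mul_assoc, mul_inv_cancel₀ hl0, mul_one]
    simp
  have hb : ∀ x ∈ t, x ≤ 1 := by
    intro x hx
    obtain ⟨μ, hμ, rfl⟩ := Multiset.mem_map.mp hx
    have : ‖μ * l⁻¹‖ = 1 := by
      rw [norm_mul, norm_inv, h1 μ hμ, hl]; norm_num
    calc g μ = (μ * l⁻¹).re := rfl
      _ ≤ ‖μ * l⁻¹‖ := Complex.re_le_norm _
      _ = 1 := this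
  have hmem : g μ₀ ∈ t := Multiset.mem_map_of_mem g hμ₀
  have hcards : Multiset.card t = Multiset.card s := Multiset.card_map _ _
  have hone : g μ₀ = 1 := by
    have hle : g μ₀ ≤ 1 := hb _ hmem
    have herase : t = g μ₀ ::ₘ t.erase (g μ₀) := (Multiset.cons_erase hmem).symm
    have hsum2 : g μ₀ + (t.erase (g μ₀)).sum = (Multiset.card s : ℝ) := by
      rw [← htsum]; conv_rhs => rw [herase]
      rw [Multiset.sum_cons]
    have hcard_erase : (Multiset.card (t.erase (g μ₀)) : ℝ) = (Multiset.card s : ℝ) - 1 := by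
      rw [Multiset.card_erase_of_mem hmem, hcards]
      have hpos : 0 < Multiset.card s := Multiset.card_pos_iff_exists_mem.mpr ⟨μ₀, hμ₀⟩
      rw [Nat.pred_eq_sub_one, Nat.cast_sub hpos]
      simp
    have hles : (t.erase (g μ₀)).sum ≤ (Multiset.card s : ℝ) - 1 := by
      have := Multiset.sum_le_card_nsmul (t.erase (g μ₀)) 1
        (fun x hx => hb x (Multiset.mem_of_mem_erase hx))
      rw [nsmul_eq_mul, mul_one, hcard_erase] at this
      exact this
    linarith
  have habs : ‖μ₀ * l⁻¹‖ = 1 := by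
    rw [norm_mul, norm_inv, h1 μ₀ hμ₀, hl]; norm_num
  have : μ₀ * l⁻¹ = 1 := eq_of_abs_one_re_one habs hone
  field_simp at this
  exact this
lemma key_scalar {W : Type*} [AddCommGroup W] [Module ℂ W] [FiniteDimensional ℂ W]
    [Nontrivial W] (f : Module.End ℂ W) {n : ℕ} (hn : 0 < n) (hfn : f ^ n = 1)
    {l : ℂ} (hl : l ^ n = 1)
    (htr : LinearMap.trace ℂ W f = (Module.finrank ℂ W : ℂ) * l) :
    f = l • 1 := by
  classical
  set d := Module.finrank ℂ W with hd
  have hd0 : 0 < d := Module.finrank_pos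
  set p := LinearMap.charpoly f with hp
  have hmonic : p.Monic := LinearMap.charpoly_monic f
  have hsplits : p.Splits := IsAlgClosed.splits p
  have hdeg : p.natDegree = d := by
    rw [hp, ← LinearMap.charpoly_toMatrix f (Module.finBasis ℂ W),
      Matrix.charpoly_natDegree_eq_dim, Fintype.card_fin]
  have hcard : Multiset.card p.roots = d := by
    rw [Polynomial.splits_iff_card_roots.mp hsplits, hdeg]
  have hsum : p.roots.sum = (d : ℂ) * l := by
    have h1 : LinearMap.trace ℂ W f
        = (LinearMap.toMatrix (Module.finBasis ℂ W) (Module.finBasis ℂ W) f).trace :=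
      LinearMap.trace_eq_matrix_trace ℂ (Module.finBasis ℂ W) f
    have h2 := Matrix.trace_eq_sum_roots_charpoly
      (LinearMap.toMatrix (Module.finBasis ℂ W) (Module.finBasis ℂ W) f)
    rw [LinearMap.charpoly_toMatrix f (Module.finBasis ℂ W)] at h2
    rw [← hp] at h2
    rw [← h2, ← h1, htr]
  have heig : ∀ μ ∈ p.roots, μ ^ n = 1 := by
    intro μ hμ
    have hroot : p.IsRoot μ := Polynomial.isRoot_of_mem_roots hμ
    obtain ⟨v, hv⟩ := (hasEigenvalue_of_isRoot_charpoly f hroot).exists_hasEigenvector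
    have h1 : (f ^ n) v = μ ^ n • v := hv.pow_apply n
    rw [hfn] at h1
    have h2 : (μ ^ n - 1) • v = 0 := by
      rw [sub_smul, one_smul, ← h1]
      simp
    rcases smul_eq_zero.mp h2 with h3 | h3
    · exact sub_eq_zero.mp h3
    · exact absurd h3 hv.right
  have hlabs : ‖l‖ = 1 := by
    have : ‖l‖ ^ n = 1 := by
      rw [← norm_pow, hl, norm_one]
    rcases pow_eq_one_iff_cases.mp this with h | h | h
    · omega
    · exact h
    · exfalso
      have := norm_nonneg l
      rw [h.1] at this
      linarith
  have habs : ∀ μ ∈ p.roots, ‖μ‖ = 1 := by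
    intro μ hμ
    have : ‖μ‖ ^ n = 1 := by
      rw [← norm_pow, heig μ hμ, norm_one]
    rcases pow_eq_one_iff_cases.mp this with h | h | h
    · omega
    · exact h
    · exfalso
      have := norm_nonneg μ
      rw [h.1] at this
      linarith
  have hall : ∀ μ ∈ p.roots, μ = l := by
    apply multiset_all_eq_of_sum hlabs habs
    rw [hcard, hsum]
  have hroots : p.roots = Multiset.replicate d l := by
    rw [Multiset.eq_replicate]
    exact ⟨hcard, hall⟩
  have hpeq : p = (X - C l) ^ d := by
    have h1 := hsplits.eq_prod_roots_of_monic hmonic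
    rw [hroots, Multiset.map_replicate, Multiset.prod_replicate] at h1
    exact h1
  -- minimal polynomial
  have hint : IsIntegral ℂ f := ⟨p, hmonic, by rw [hp]; exact LinearMap.aeval_self_charpoly f⟩
  have hdvd1 : minpoly ℂ f ∣ (X - C l) ^ d := by
    rw [← hpeq, hp]
    exact minpoly.dvd ℂ f (LinearMap.aeval_self_charpoly f)
  have hdvd2 : minpoly ℂ f ∣ X ^ n - C 1 := by
    apply minpoly.dvd
    rw [map_sub, map_pow, aeval_X, aeval_C]
    rw [hfn]
    simp
  have hsq : Squarefree (minpoly ℂ f) := by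
    refine Squarefree.squarefree_of_dvd hdvd2 ?_
    apply Polynomial.Separable.squarefree
    apply Polynomial.separable_X_pow_sub_C (1 : ℂ) ?_ one_ne_zero
    exact_mod_cast Nat.cast_ne_zero.mpr hn.ne'
  have hprime : Prime (X - C l : ℂ[X]) := Polynomial.prime_X_sub_C l
  obtain ⟨i, hi, hass⟩ := (dvd_prime_pow hprime d).mp hdvd1
  have hmeq : minpoly ℂ f = (X - C l) ^ i :=
    Polynomial.eq_of_monic_of_associated (minpoly.monic hint)
      ((Polynomial.monic_X_sub_C l).pow i) hass
  have hi1 : i = 1 := by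
    rcases Nat.lt_or_ge i 2 with h2 | h2
    · interval_cases i
      · exfalso
        have := minpoly.natDegree_pos hint
        rw [hmeq] at this
        simp at this
      · rfl
    · exfalso
      have hdd : (X - C l : ℂ[X]) * (X - C l) ∣ minpoly ℂ f := by
        rw [hmeq, ← sq]
        exact pow_dvd_pow _ h2
      exact Polynomial.not_isUnit_X_sub_C l (hsq _ hdd)
  rw [hi1, pow_one] at hmeq
  have haev := minpoly.aeval ℂ f
  rw [hmeq, map_sub, aeval_X, aeval_C] at haev
  have : f = algebraMap ℂ (Module.End ℂ W) l := sub_eq_zero.mp haev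
  rw [this]
  ext x
  simp [Module.algebraMap_end_apply]

lemma hasEnoughRou (B : Type*) [CommGroup B] [Finite B] :
    HasEnoughRootsOfUnity ℂ (Monoid.exponent B) := by
  have : NeZero ((Monoid.exponent B : ℕ) : ℂ) :=
    ⟨by exact_mod_cast Monoid.exponent_ne_zero_of_finite⟩
  infer_instance

/-- Evaluation of characters at a point, as a homomorphism. -/
def evalHom {A : Type*} [CommGroup A] (a : A) : (A →* ℂˣ) →* ℂˣ where
  toFun φ := φ a
  map_one' := rfl
  map_mul' _ _ := rfl

/-- Double-duality evaluation homomorphism. -/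
def evalHom₂ (A : Type*) [CommGroup A] : A →* ((A →* ℂˣ) →* ℂˣ) where
  toFun a := evalHom a
  map_one' := by ext φ; simp [evalHom]
  map_mul' a b := by ext φ; simp [evalHom]

lemma subgroup_dual_eq_top {A : Type*} [CommGroup A] [Finite A]
    (H : Subgroup (A →* ℂˣ)) (hH : ∀ a : A, (∀ φ ∈ H, φ a = 1) → a = 1) : H = ⊤ := by
  haveI := hasEnoughRou A
  obtain ⟨e⟩ := CommGroup.monoidHom_mulEquiv_of_hasEnoughRootsOfUnity A ℂ
  haveI : Finite (A →* ℂˣ) := Finite.of_equiv A e.symm.toEquiv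
  by_contra hne
  obtain ⟨φ₀, hφ₀⟩ : ∃ φ₀, φ₀ ∉ H := by
    by_contra hcon; push_neg at hcon
    exact hne ((Subgroup.eq_top_iff' H).mpr hcon)
  haveI : IsMulCommutative (A →* ℂˣ) :=
    ⟨⟨fun a b => MonoidHom.ext fun x => mul_comm (a x) (b x)⟩⟩
  haveI := H.normal_of_comm
  haveI : Finite ((A →* ℂˣ) ⧸ H) := Quotient.finite _
  haveI := hasEnoughRou ((A →* ℂˣ) ⧸ H)
  have hq : (QuotientGroup.mk' H) φ₀ ≠ 1 := by
    intro hcon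
    exact hφ₀ ((QuotientGroup.eq_one_iff φ₀).mp hcon)
  obtain ⟨χ, hχ⟩ := CommGroup.exists_apply_ne_one_of_hasEnoughRootsOfUnity
    ((A →* ℂˣ) ⧸ H) ℂ hq
  set Φ := χ.comp (QuotientGroup.mk' H) with hΦ
  have hinj : Function.Injective (evalHom₂ A) := by
    rw [injective_iff_map_eq_one]
    intro a ha
    by_contra hcon
    obtain ⟨φ, hφ⟩ := CommGroup.exists_apply_ne_one_of_hasEnoughRootsOfUnity A ℂ hcon
    exact hφ (congrArg (fun F => F φ) ha)
  have hcard : Nat.card A = Nat.card ((A →* ℂˣ) →* ℂˣ) := by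
    haveI := hasEnoughRou (A →* ℂˣ)
    obtain ⟨e2⟩ := CommGroup.monoidHom_mulEquiv_of_hasEnoughRootsOfUnity (A →* ℂˣ) ℂ
    rw [Nat.card_congr e2.toEquiv, Nat.card_congr e.toEquiv]
  haveI : Finite ((A →* ℂˣ) →* ℂˣ) := by
    haveI := hasEnoughRou (A →* ℂˣ)
    obtain ⟨e2⟩ := CommGroup.monoidHom_mulEquiv_of_hasEnoughRootsOfUnity (A →* ℂˣ) ℂ
    exact Finite.of_equiv _ e2.symm.toEquiv
  have hbij : Function.Bijective (evalHom₂ A) :=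
    (Nat.bijective_iff_injective_and_card _).mpr ⟨hinj, hcard⟩
  obtain ⟨z, hz⟩ := hbij.surjective Φ
  have hz1 : z = 1 := by
    apply hH z
    intro φ hφ
    have h1 : Φ φ = 1 := by
      rw [hΦ, MonoidHom.comp_apply]
      have h2 : (QuotientGroup.mk' H) φ = 1 := (QuotientGroup.eq_one_iff φ).mpr hφ
      rw [h2, map_one]
    rw [← hz] at h1
    exact h1
  rw [hz1] at hz
  simp only [map_one] at hz
  apply hχ
  have := congrArg (fun F => F φ₀) hz
  simpa [hΦ] using this.symm

/-- Proposition 2.9 for full subrepresentations: for irreducible representations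
`ρ_1, …, ρ_m` of a finite group `G` on nonzero finite-dimensional complex vector
spaces, with central characters `ψ_j`, the projective separation condition (A)
(`χ_j(γh) = λ·χ_j(γk)` for all `γ, j` implies `h = k`) holds iff both
(i) `⋂ ker ρ_j = 1` and (ii) the ratios `ψ_j ψ_1⁻¹` generate the character group
of the center `Z(G)`. -/
theorem full_projective_embedding_iff
    {G : Type*} [Group G] [Fintype G] {m : ℕ} (hm : 0 < m)
    (W : Fin m → Type*) [∀ j, AddCommGroup (W j)] [∀ j, Module ℂ (W j)]
    [∀ j, FiniteDimensional ℂ (W j)] [∀ j, Nontrivial (W j)]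
    (ρ : ∀ j, Representation ℂ G (W j))
    (hirr : ∀ j, ∀ p : Submodule ℂ (W j),
      (∀ g : G, ∀ x ∈ p, ρ j g x ∈ p) → p = ⊥ ∨ p = ⊤)
    (ψ : Fin m → (↥(Subgroup.center G) →* ℂˣ))
    (hψ : ∀ j, ∀ z : ↥(Subgroup.center G),
      ρ j (z : G) = ((ψ j z : ℂ) • (1 : W j →ₗ[ℂ] W j))) :
    (∀ h k : G,
        (∃ l : ℂ, ∀ γ : G, ∀ j,
          LinearMap.trace ℂ (W j) (ρ j (γ * h))
            = l * LinearMap.trace ℂ (W j) (ρ j (γ * k))) → h = k)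
      ↔ ((∀ h : G, h ≠ 1 → ∃ j, ρ j h ≠ 1) ∧
          Subgroup.closure
            (Set.range fun j : Fin m => ψ j * (ψ ⟨0, hm⟩)⁻¹) = ⊤) := by
  classical
  letI : CommGroup ↥(Subgroup.center G) :=
    { (inferInstance : Group ↥(Subgroup.center G)) with
      mul_comm := fun a b => Subtype.ext (Subgroup.mem_center_iff.mp b.2 a) }
  set j0 : Fin m := ⟨0, hm⟩ with hj0
  constructor
  · intro hA
    constructor
    · -- faithfulness
      intro h hne
      by_contra hc
      push_neg at hc
      apply hne
      apply hA h 1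
      refine ⟨1, fun γ j => ?_⟩
      rw [map_mul (ρ j) γ h, map_mul (ρ j) γ 1, hc j, mul_one, map_one (ρ j), mul_one,
        one_mul]
    · -- generation of the dual
      apply subgroup_dual_eq_top
      intro z hz
      have hzj : ∀ j, ψ j z = ψ j0 z := by
        intro j
        have hmem : (ψ j * (ψ j0)⁻¹) ∈ Subgroup.closure
            (Set.range fun j : Fin m => ψ j * (ψ j0)⁻¹) :=
          Subgroup.subset_closure ⟨j, rfl⟩
        have h1 := hz _ hmem
        rw [MonoidHom.mul_apply, MonoidHom.inv_apply] at h1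
        exact mul_inv_eq_one.mp h1
      have hcoe : (z : G) = 1 := by
        apply hA (z : G) 1
        refine ⟨((ψ j0 z : ℂˣ) : ℂ), fun γ j => ?_⟩
        rw [mul_one, map_mul, hψ j z, hzj j, mul_smul_comm, mul_one, map_smul,
          smul_eq_mul]
      exact OneMemClass.coe_eq_one.mp hcoe
  · rintro ⟨hfaith, hgen⟩ h k ⟨l, hl⟩
    set u := k⁻¹ * h with hu
    have hq : ∀ (δ : G) (j : Fin m), LinearMap.trace ℂ (W j) (ρ j (δ * u))
        = l * LinearMap.trace ℂ (W j) (ρ j δ) := by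
      intro δ j
      have h1 := hl (δ * k⁻¹) j
      rw [mul_assoc, mul_assoc, inv_mul_cancel, mul_one] at h1
      rw [hu] ; exact h1
    have hpow : ∀ (j : Fin m) (i : ℕ), LinearMap.trace ℂ (W j) (ρ j (u ^ i))
        = l ^ i * (Module.finrank ℂ (W j) : ℂ) := by
      intro j i
      induction i with
      | zero => rw [pow_zero, pow_zero, one_mul, map_one, LinearMap.trace_one]
      | succ i ih =>
        rw [pow_succ, hq (u ^ i) j, ih, pow_succ]
        ring
    have hn : 0 < orderOf u := orderOf_pos u
    have hln : l ^ orderOf u = 1 := by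
      have h1 := hpow j0 (orderOf u)
      rw [pow_orderOf_eq_one, map_one, LinearMap.trace_one] at h1
      have hd0 : (Module.finrank ℂ (W j0) : ℂ) ≠ 0 := by
        exact_mod_cast Module.finrank_pos.ne'
      have h2 : l ^ orderOf u * (Module.finrank ℂ (W j0) : ℂ)
          = 1 * (Module.finrank ℂ (W j0) : ℂ) := by
        rw [← h1, one_mul]
      exact mul_right_cancel₀ hd0 h2
    have hl0 : l ≠ 0 := by
      intro h0
      rw [h0, zero_pow hn.ne'] at hln
      exact zero_ne_one hln
    have hscal : ∀ j, ρ j u = l • (1 : W j →ₗ[ℂ] W j) := by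
      intro j
      apply key_scalar (ρ j u) hn _ hln
      · have h1 := hpow j 1
        rw [pow_one, pow_one] at h1
        rw [h1, mul_comm]
      · rw [← map_pow, pow_orderOf_eq_one, map_one]
    have hscalinv : ∀ j, ρ j u⁻¹ = l⁻¹ • (1 : W j →ₗ[ℂ] W j) := by
      intro j
      have h1 : ρ j u * ρ j u⁻¹ = 1 := by
        rw [← map_mul, mul_inv_cancel, map_one]
      rw [hscal j, smul_mul_assoc, one_mul] at h1
      exact ((inv_smul_eq_iff₀ hl0).mpr h1.symm).symm
    have hcenter : u ∈ Subgroup.center G := by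
      rw [Subgroup.mem_center_iff]
      intro g
      have hc1 : g * u * g⁻¹ * u⁻¹ = 1 := by
        by_contra hne
        obtain ⟨j, hj⟩ := hfaith _ hne
        apply hj
        have hconj : ρ j (g * u * g⁻¹) = l • (1 : W j →ₗ[ℂ] W j) := by
          rw [map_mul (ρ j) (g * u) g⁻¹, map_mul (ρ j) g u, hscal j,
            mul_smul_comm l (ρ j g) (1 : W j →ₗ[ℂ] W j), mul_one, smul_mul_assoc,
            ← map_mul, mul_inv_cancel, map_one]
        rw [map_mul (ρ j) (g * u * g⁻¹) u⁻¹, hconj, hscalinv j,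
          mul_smul_comm l⁻¹ (l • (1 : W j →ₗ[ℂ] W j)) (1 : W j →ₗ[ℂ] W j), mul_one,
          smul_smul, inv_mul_cancel₀ hl0, one_smul]
      have h2 : g * u * g⁻¹ = u := by
        have h3 := mul_eq_one_iff_eq_inv.mp hc1
        simpa using h3
      calc g * u = g * u * g⁻¹ * g := (inv_mul_cancel_right _ _).symm
        _ = u * g := by rw [h2]
    set z : ↥(Subgroup.center G) := ⟨u, hcenter⟩ with hzdef
    have hψz : ∀ j, ((ψ j z : ℂˣ) : ℂ) = l := by
      intro j
      have h1 := hψ j z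
      have h2 : ρ j u = ((ψ j z : ℂˣ) : ℂ) • (1 : W j →ₗ[ℂ] W j) := h1
      rw [hscal j] at h2
      obtain ⟨x, hx⟩ := exists_ne (0 : W j)
      have h3 := congrArg (fun f => f x) h2
      simp only [LinearMap.smul_apply, Module.End.one_apply] at h3
      have h4 := sub_eq_zero.mpr h3
      rw [← sub_smul] at h4
      rcases smul_eq_zero.mp h4 with h5 | h5
      · exact (sub_eq_zero.mp h5).symm
      · exact absurd h5 hx
    have hall : ∀ φ : ↥(Subgroup.center G) →* ℂˣ, φ z = 1 := by
      intro φ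
      have hle : Subgroup.closure (Set.range fun j : Fin m => ψ j * (ψ j0)⁻¹)
          ≤ (evalHom z).ker := by
        rw [Subgroup.closure_le]
        rintro - ⟨j, rfl⟩
        rw [SetLike.mem_coe, MonoidHom.mem_ker]
        show (ψ j * (ψ j0)⁻¹) z = 1
        rw [MonoidHom.mul_apply, MonoidHom.inv_apply, mul_inv_eq_one]
        apply Units.ext
        rw [hψz j, hψz j0]
      rw [hgen] at hle
      have := hle (Subgroup.mem_top φ)
      rwa [MonoidHom.mem_ker] at this
    have hz1 : z = 1 := by
      by_contra hne
      haveI := hasEnoughRou (↥(Subgroup.center G))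
      obtain ⟨φ, hφ⟩ := CommGroup.exists_apply_ne_one_of_hasEnoughRootsOfUnity
        (↥(Subgroup.center G)) ℂ hne
      exact hφ (hall φ)
    have hu1 : u = 1 := by
      have := congrArg (Subtype.val) hz1
      exact this
    rw [hu] at hu1
    exact (eq_of_inv_mul_eq_one hu1).symm
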